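/- Let E^{*,*} be a first-quadrant double complex of R-modules (E^{p,q} = 0 for p < 0 or q < 0), and let C be a cochain complex with C^q = 0 for q < 0, equipped with maps h_q : C^q → E^{0,q} making each row 0 → C^q → E^{0,q} → E^{1,q} → E^{2,q} → ⋯ exact, and such that the composites C^q → E^{0,q} → E^{0,q+1} and C^q → C^{q+1} → E^{0,q+1} agree up to sign. Then the induced map C → Tot⊕(E^{*,*}) is a quasi-isomorphism. -/
import Mathlib


/-- A chain map `f` between (elementwise given) cochain complexes is a quasi-isomorphism. -/
def IsQuasiIso (R : Type) [Ring R] (X Y : ℤ → Type)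
    [∀ q, AddCommGroup (X q)] [∀ q, Module R (X q)]
    [∀ q, AddCommGroup (Y q)] [∀ q, Module R (Y q)]
    (dX : ∀ q, X q →ₗ[R] X (q + 1)) (dY : ∀ q, Y q →ₗ[R] Y (q + 1))
    (f : ∀ q, X q →ₗ[R] Y q) : Prop :=
  (∀ (q : ℤ) (y : Y (q + 1)), dY (q + 1) y = 0 →
      ∃ x : X (q + 1), dX (q + 1) x = 0 ∧ ∃ u : Y q, y - f (q + 1) x = dY q u) ∧
  (∀ (q : ℤ) (x : X (q + 1)), dX (q + 1) x = 0 → (∃ u : Y q, f (q + 1) x = dY q u) →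
      ∃ v : X q, dX q v = x)

/-- Transport along equalities of indices of a doubly indexed family of modules. -/
def castM {R : Type} [Ring R] (D : ℤ → ℤ → Type)
    [∀ p q, AddCommGroup (D p q)] [∀ p q, Module R (D p q)] :
    ∀ {p q p' q' : ℤ}, p = p' → q = q' → (D p q →ₗ[R] D p' q')
  | _, _, _, _, rfl, rfl => LinearMap.id

/-- The differential `d_h + d_v` of the totalisation of a double complex. -/
def totd {R : Type} [Ring R] (D : ℤ → ℤ → Type)
    [∀ p q, AddCommGroup (D p q)] [∀ p q, Module R (D p q)]
    (dh : ∀ p q, D p q →ₗ[R] D (p + 1) q) (dv : ∀ p q, D p q →ₗ[R] D p (q + 1))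
    (n : ℤ) : (∀ p, D p (n - p)) →ₗ[R] (∀ p, D p (n + 1 - p)) :=
  LinearMap.pi fun p =>
    (castM D (by omega : p - 1 + 1 = p) (by omega : n - (p - 1) = n + 1 - p)).comp
        ((dh (p - 1) (n - (p - 1))).comp (LinearMap.proj (p - 1)))
      + (castM D rfl (by omega : n - p + 1 = n + 1 - p)).comp
        ((dv p (n - p)).comp (LinearMap.proj p))

section Aux
variable {R : Type} [Ring R] (E : ℤ → ℤ → Type)
  [∀ p q, AddCommGroup (E p q)] [∀ p q, Module R (E p q)]

lemma cM_cM {p q p' q' p'' q'' : ℤ} (h1 : p = p') (h2 : q = q') (h3 : p' = p'') (h4 : q' = q'')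
    (x : E p q) : castM (R := R) E h3 h4 (castM (R := R) E h1 h2 x) = castM (R := R) E (h1.trans h3) (h2.trans h4) x := by
  subst h1; subst h2; subst h3; subst h4; rfl

lemma cM_self {p q : ℤ} (h1 : p = p) (h2 : q = q) (x : E p q) : castM (R := R) E h1 h2 x = x := rfl

lemma cM_irrel {p q p' q' : ℤ} (h1 h1' : p = p') (h2 h2' : q = q') (x : E p q) :
    castM (R := R) E h1 h2 x = castM (R := R) E h1' h2' x := rfl

lemma cM_zero_iff {p q p' q' : ℤ} (h1 : p = p') (h2 : q = q') (x : E p q) :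
    castM (R := R) E h1 h2 x = 0 ↔ x = 0 := by subst h1; subst h2; exact Iff.rfl

lemma cM_zero {p q p' q' : ℤ} (h1 : p = p') (h2 : q = q') :
    castM (R := R) E h1 h2 (0 : E p q) = 0 := by subst h1; subst h2; rfl

lemma cM_inj {p q p' q' : ℤ} (h1 : p = p') (h2 : q = q') (x y : E p q)
    (hxy : castM (R := R) E h1 h2 x = castM (R := R) E h1 h2 y) : x = y := by
  subst h1; subst h2; exact hxy

variable (Eh : ∀ p q, E p q →ₗ[R] E (p + 1) q) (Ev : ∀ p q, E p q →ₗ[R] E p (q + 1))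

lemma Eh_cM {p q p' q' : ℤ} (h1 : p = p') (h2 : q = q') (x : E p q) :
    Eh p' q' (castM (R := R) E h1 h2 x) = castM (R := R) E (by rw [h1]) h2 (Eh p q x) := by
  subst h1; subst h2; rfl

lemma Ev_cM {p q p' q' : ℤ} (h1 : p = p') (h2 : q = q') (x : E p q) :
    Ev p' q' (castM (R := R) E h1 h2 x) = castM (R := R) E h1 (by rw [h2]) (Ev p q x) := by
  subst h1; subst h2; rfl

lemma pi_cast {n : ℤ} (y : ∀ p, E p (n - p)) {p p' : ℤ} (h : p' = p) :
    y p = castM (R := R) E h (by rw [h]) (y p') := by subst h; rfl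

lemma totd_apply (n p : ℤ) (x : ∀ p, E p (n - p)) :
    totd E Eh Ev n x p =
      castM (R := R) E (by omega) (by omega) (Eh (p-1) (n-(p-1)) (x (p-1)))
      + castM (R := R) E rfl (by omega) (Ev p (n-p) (x p)) := rfl


lemma cM_add_eq_zero {p q p' q' : ℤ} (h1 h1' : p = p') (h2 h2' : q = q') (a b : E p q)
    (hab : a + b = 0) :
    castM (R := R) E h1 h2 a + castM (R := R) E h1' h2' b = 0 := by
  subst h1; subst h2
  simp only [cM_self] at *
  exact hab

lemma totd_totd
    (hEhh : ∀ p q (x : E p q), Eh (p + 1) q (Eh p q x) = 0)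
    (hEvv : ∀ p q (x : E p q), Ev p (q + 1) (Ev p q x) = 0)
    (hEanti : ∀ p q (x : E p q), Eh p (q + 1) (Ev p q x) + Ev (p + 1) q (Eh p q x) = 0)
    (n : ℤ) (x : ∀ p, E p (n - p)) :
    totd E Eh Ev (n + 1) (totd E Eh Ev n x) = 0 := by
  funext p
  show totd E Eh Ev (n + 1) (totd E Eh Ev n x) p = 0
  rw [totd_apply E Eh Ev (n+1) p, totd_apply E Eh Ev n (p-1), totd_apply E Eh Ev n p]
  simp only [map_add, Eh_cM, Ev_cM, cM_cM, hEhh, hEvv, cM_zero, zero_add, add_zero]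
  exact cM_add_eq_zero E _ _ _ _ _ _ (hEanti (p-1) (n-(p-1)) (x (p-1)))

lemma totd_totd_cast
    (hEhh : ∀ p q (x : E p q), Eh (p + 1) q (Eh p q x) = 0)
    (hEvv : ∀ p q (x : E p q), Ev p (q + 1) (Ev p q x) = 0)
    (hEanti : ∀ p q (x : E p q), Eh p (q + 1) (Ev p q x) + Ev (p + 1) q (Eh p q x) = 0)
    {n n' : ℤ} (hn : n + 1 = n') (w : ∀ p, E p (n - p)) :
    totd E Eh Ev n' (fun p => castM (R := R) E rfl (by omega : n + 1 - p = n' - p)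
      (totd E Eh Ev n w p)) = 0 := by
  subst hn
  exact totd_totd E Eh Ev hEhh hEvv hEanti n w

lemma push
    (hEhh : ∀ p q (x : E p q), Eh (p + 1) q (Eh p q x) = 0)
    (hEvv : ∀ p q (x : E p q), Ev p (q + 1) (Ev p q x) = 0)
    (hEanti : ∀ p q (x : E p q), Eh p (q + 1) (Ev p q x) + Ev (p + 1) q (Eh p q x) = 0)
    (hEquad : ∀ p q, p < 0 ∨ q < 0 → ∀ x : E p q, x = 0)
    (hexact : ∀ p q (y : E (p + 1) q), Eh (p + 1) q y = 0 → ∃ x : E p q, Eh p q x = y)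
    (m : ℕ) : ∀ (q : ℤ) (y : ∀ p, E p (q + 1 - p)),
    totd E Eh Ev (q + 1) y = 0 → (∀ p : ℤ, (m : ℤ) ≤ p → y p = 0) →
    ∃ u : ∀ p, E p (q - p), ∀ p, p ≠ 0 → y p = totd E Eh Ev q u p := by
  induction m with
  | zero =>
    intro q y hy htop
    refine ⟨0, fun p hp => ?_⟩
    simp only [map_zero, Pi.zero_apply]
    rcases lt_or_ge p 0 with hp0 | hp0
    · exact hEquad p _ (Or.inl hp0) (y p)
    · exact htop p (by push_cast; omega)
  | succ m ih =>
    intro q y hy htop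
    rcases Nat.eq_zero_or_pos m with rfl | hm
    · refine ⟨0, fun p hp => ?_⟩
      rw [map_zero]
      rcases lt_or_ge p 0 with hp0 | hp0
      · exact hEquad p _ (Or.inl hp0) (y p)
      · exact htop p (by push_cast; omega)
    · -- m ≥ 1
      have h1 : (1:ℤ) ≤ (m:ℤ) := by exact_mod_cast hm
      -- cocycle condition at component m+1
      have hc := congrFun hy ((m:ℤ) + 1)
      rw [totd_apply] at hc
      simp only [Pi.zero_apply] at hc
      rw [htop ((m:ℤ)+1) (by push_cast; omega)] at hc
      rw [pi_cast (R := R) E y (show (m:ℤ) = (m:ℤ)+1-1 by omega)] at hc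
      rw [Eh_cM, cM_cM, map_zero, cM_zero, add_zero] at hc
      rw [cM_zero_iff] at hc
      -- hc : Eh m (q+1-m) (y m) = 0
      have hEh0 : Eh ((m:ℤ)-1+1) (q+1-(m:ℤ))
          (castM (R := R) E (show (m:ℤ) = (m:ℤ)-1+1 by omega) rfl (y (m:ℤ))) = 0 := by
        rw [Eh_cM, cM_zero_iff]
        exact hc
      obtain ⟨z, hz⟩ := hexact ((m:ℤ)-1) (q+1-(m:ℤ)) _ hEh0
      set w : ∀ p, E p (q - p) := Function.update (0 : ∀ p, E p (q - p)) ((m:ℤ)-1)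
        (castM (R := R) E rfl (show q+1-(m:ℤ) = q-((m:ℤ)-1) by omega) z) with hw
      have hwm : w ((m:ℤ)-1) = castM (R := R) E rfl (show q+1-(m:ℤ) = q-((m:ℤ)-1) by omega) z :=
        Function.update_self _ _ _
      have hwo : ∀ p : ℤ, p ≠ (m:ℤ)-1 → w p = 0 := fun p hp => Function.update_of_ne hp _ _
      set y' : ∀ p, E p (q + 1 - p) := y - totd E Eh Ev q w with hy'def
      have hy' : totd E Eh Ev (q+1) y' = 0 := by
        rw [hy'def, map_sub, hy, totd_totd E Eh Ev hEhh hEvv hEanti q w, sub_zero]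
      have htop' : ∀ p : ℤ, (m:ℤ) ≤ p → y' p = 0 := by
        intro p hp
        have hyp : y' p = y p - totd E Eh Ev q w p := rfl
        rcases eq_or_lt_of_le hp with hpe | hpl
        · -- p = m
          subst hpe
          rw [hyp, totd_apply, hwm, hwo (m:ℤ) (by omega), map_zero, cM_zero, add_zero]
          rw [Eh_cM, hz, cM_cM, cM_cM, cM_self, sub_self]
        · rw [hyp, totd_apply, hwo p (by omega), hwo (p-1) (by omega)]
          simp only [map_zero, cM_zero, add_zero, zero_add]
          rw [htop p (by push_cast; omega), sub_zero]
      obtain ⟨u', hu'⟩ := ih q y' hy' htop'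
      refine ⟨u' + w, fun p hp => ?_⟩
      rw [map_add]
      have : y p = y' p + totd E Eh Ev q w p := by
        rw [hy'def]; simp
      rw [this, hu' p hp]
      rfl

lemma push2
    (hEhh : ∀ p q (x : E p q), Eh (p + 1) q (Eh p q x) = 0)
    (hEvv : ∀ p q (x : E p q), Ev p (q + 1) (Ev p q x) = 0)
    (hEanti : ∀ p q (x : E p q), Eh p (q + 1) (Ev p q x) + Ev (p + 1) q (Eh p q x) = 0)
    (hEquad : ∀ p q, p < 0 ∨ q < 0 → ∀ x : E p q, x = 0)
    (hexact : ∀ p q (y : E (p + 1) q), Eh (p + 1) q y = 0 → ∃ x : E p q, Eh p q x = y)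
    (m : ℕ) : ∀ (q : ℤ) (u : ∀ p, E p (q - p)),
    (∀ p : ℤ, 1 ≤ p → totd E Eh Ev q u p = 0) → (∀ p : ℤ, (m : ℤ) ≤ p → u p = 0) →
    ∃ u' : ∀ p, E p (q - p), (∀ p : ℤ, p ≠ 0 → u' p = 0) ∧
      totd E Eh Ev q u' = totd E Eh Ev q u := by
  induction m with
  | zero =>
    intro q u h1 htop
    refine ⟨u, fun p hp => ?_, rfl⟩
    rcases lt_or_ge p 0 with hp0 | hp0
    · exact hEquad p _ (Or.inl hp0) (u p)
    · exact htop p (by push_cast; omega)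
  | succ m ih =>
    intro q u h1 htop
    rcases Nat.eq_zero_or_pos m with rfl | hm
    · refine ⟨u, fun p hp => ?_, rfl⟩
      rcases lt_or_ge p 0 with hp0 | hp0
      · exact hEquad p _ (Or.inl hp0) (u p)
      · exact htop p (by push_cast; omega)
    · have hm1 : (1:ℤ) ≤ (m:ℤ) := by exact_mod_cast hm
      have hc := h1 ((m:ℤ) + 1) (by omega)
      rw [totd_apply] at hc
      rw [htop ((m:ℤ)+1) (by push_cast; omega)] at hc
      rw [pi_cast (R := R) E u (show (m:ℤ) = (m:ℤ)+1-1 by omega)] at hc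
      rw [Eh_cM, cM_cM, map_zero, cM_zero, add_zero] at hc
      rw [cM_zero_iff] at hc
      -- hc : Eh m (q-m) (u m) = 0
      have hEh0 : Eh ((m:ℤ)-1+1) (q-(m:ℤ))
          (castM (R := R) E (show (m:ℤ) = (m:ℤ)-1+1 by omega) rfl (u (m:ℤ))) = 0 := by
        rw [Eh_cM, cM_zero_iff]
        exact hc
      obtain ⟨z, hz⟩ := hexact ((m:ℤ)-1) (q-(m:ℤ)) _ hEh0
      set w : ∀ p, E p (q - 1 - p) := Function.update (0 : ∀ p, E p (q - 1 - p)) ((m:ℤ)-1)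
        (castM (R := R) E rfl (show q-(m:ℤ) = q-1-((m:ℤ)-1) by omega) z) with hw
      have hwm : w ((m:ℤ)-1) = castM (R := R) E rfl (show q-(m:ℤ) = q-1-((m:ℤ)-1) by omega) z :=
        Function.update_self _ _ _
      have hwo : ∀ p : ℤ, p ≠ (m:ℤ)-1 → w p = 0 := fun p hp => Function.update_of_ne hp _ _
      set g : ∀ p, E p (q - p) := fun p => castM (R := R) E rfl (by omega : q - 1 + 1 - p = q - p)
        (totd E Eh Ev (q-1) w p) with hg
      have hgz : totd E Eh Ev q g = 0 :=
        totd_totd_cast E Eh Ev hEhh hEvv hEanti (by omega : q - 1 + 1 = q) w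
      set u₂ : ∀ p, E p (q - p) := u - g with hu₂
      have htot₂ : totd E Eh Ev q u₂ = totd E Eh Ev q u := by
        rw [hu₂, map_sub, hgz, sub_zero]
      have h1' : ∀ p : ℤ, 1 ≤ p → totd E Eh Ev q u₂ p = 0 := by
        intro p hp; rw [htot₂]; exact h1 p hp
      have htop' : ∀ p : ℤ, (m:ℤ) ≤ p → u₂ p = 0 := by
        intro p hp
        have hyp : u₂ p = u p - g p := rfl
        rcases eq_or_lt_of_le hp with hpe | hpl
        · subst hpe
          rw [hyp, hg]
          show u (m:ℤ) - castM (R := R) E rfl _ (totd E Eh Ev (q-1) w (m:ℤ)) = 0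
          rw [totd_apply, hwm, hwo (m:ℤ) (by omega), map_zero, cM_zero, add_zero]
          rw [Eh_cM, hz, cM_cM, cM_cM, cM_cM, cM_self, sub_self]
        · rw [hyp, hg]
          show u p - castM (R := R) E rfl _ (totd E Eh Ev (q-1) w p) = 0
          rw [totd_apply, hwo p (by omega), hwo (p-1) (by omega)]
          simp only [map_zero, cM_zero, add_zero, zero_add]
          rw [htop p (by push_cast; omega), sub_zero]
      obtain ⟨u', hu'0, hu'tot⟩ := ih q u₂ h1' htop'
      exact ⟨u', hu'0, hu'tot.trans htot₂⟩

end Aux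

def castC {R : Type} [Ring R] (C : ℤ → Type)
    [∀ q, AddCommGroup (C q)] [∀ q, Module R (C q)] :
    ∀ {q q' : ℤ}, q = q' → (C q →ₗ[R] C q')
  | _, _, rfl => LinearMap.id

section AuxC
variable {R : Type} [Ring R] (C : ℤ → Type) [∀ q, AddCommGroup (C q)] [∀ q, Module R (C q)]
  (E : ℤ → ℤ → Type) [∀ p q, AddCommGroup (E p q)] [∀ p q, Module R (E p q)]

lemma cC_cC {q q' q'' : ℤ} (h1 : q = q') (h2 : q' = q'') (x : C q) :
    castC (R := R) C h2 (castC (R := R) C h1 x) = castC (R := R) C (h1.trans h2) x := by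
  subst h1; subst h2; rfl

lemma cC_self {q : ℤ} (hq : q = q) (x : C q) : castC (R := R) C hq x = x := rfl

lemma h_cC (h : ∀ q, C q →ₗ[R] E 0 q) {q q' : ℤ} (hq : q = q') (x : C q) :
    h q' (castC (R := R) C hq x) = castM (R := R) E rfl hq (h q x) := by subst hq; rfl

lemma dC_cC (dC : ∀ q, C q →ₗ[R] C (q + 1)) {q q' : ℤ} (hq : q = q') (x : C q) :
    dC q' (castC (R := R) C hq x) = castC (R := R) C (by rw [hq]) (dC q x) := by
  subst hq; rfl

end AuxC

/-- Let `E` be a first-quadrant double complex of `R`-modules and `C` a cochain complex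
vanishing in negative degrees, with augmentation maps `h q : C q → E 0 q` making each
augmented row `0 → C^q → E^{0,q} → E^{1,q} → ⋯` exact, and such that the two composites
`C^q → E^{0,q} → E^{0,q+1}` and `C^q → C^{q+1} → E^{0,q+1}` agree up to sign.  Then the
induced map `C → Tot⊕(E)` is a quasi-isomorphism. -/
theorem augmented_firstQuadrant_tot_quasiIso (R : Type) [Ring R]
    (E : ℤ → ℤ → Type)
    [∀ p q, AddCommGroup (E p q)] [∀ p q, Module R (E p q)]
    (Eh : ∀ p q, E p q →ₗ[R] E (p + 1) q) (Ev : ∀ p q, E p q →ₗ[R] E p (q + 1))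
    (hEhh : ∀ p q (x : E p q), Eh (p + 1) q (Eh p q x) = 0)
    (hEvv : ∀ p q (x : E p q), Ev p (q + 1) (Ev p q x) = 0)
    (hEanti : ∀ p q (x : E p q), Eh p (q + 1) (Ev p q x) + Ev (p + 1) q (Eh p q x) = 0)
    (hEquad : ∀ p q, p < 0 ∨ q < 0 → ∀ x : E p q, x = 0)
    (C : ℤ → Type) [∀ q, AddCommGroup (C q)] [∀ q, Module R (C q)]
    (dC : ∀ q, C q →ₗ[R] C (q + 1))
    (hCsq : ∀ q (x : C q), dC (q + 1) (dC q x) = 0)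
    (hCneg : ∀ q, q < 0 → ∀ x : C q, x = 0)
    (h : ∀ q, C q →ₗ[R] E 0 q)
    -- exactness of the augmented rows:
    (hinj : ∀ q (x : C q), h q x = 0 → x = 0)
    (hexact0 : ∀ q (y : E 0 q), Eh 0 q y = 0 → ∃ x : C q, h q x = y)
    (hexact : ∀ p q (y : E (p + 1) q), Eh (p + 1) q y = 0 → ∃ x : E p q, Eh p q x = y)
    -- the two composites agree up to sign (for each `q`):
    (hsign : ∀ q, (∀ x : C q, Ev 0 q (h q x) = h (q + 1) (dC q x)) ∨
                  (∀ x : C q, Ev 0 q (h q x) = - h (q + 1) (dC q x))) :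
    IsQuasiIso R C (fun n => ∀ p, E p (n - p)) dC (totd E Eh Ev)
      (fun n => LinearMap.pi fun p =>
        if hp : (0 : ℤ) = p then
          (castM E hp (by omega : n = n - p)).comp (h n)
        else 0) := by
  constructor
  · -- surjectivity on cohomology
    intro q y hy
    have htop : ∀ p : ℤ, (((q+2).toNat + 1 : ℕ) : ℤ) ≤ p → y p = 0 := by
      intro p hp
      exact hEquad p _ (Or.inr (by push_cast at hp ⊢; omega)) (y p)
    obtain ⟨u, hu⟩ := push E Eh Ev hEhh hEvv hEanti hEquad hexact
      ((q+2).toNat + 1) q y hy htop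
    set y0 : ∀ p, E p (q + 1 - p) := y - totd E Eh Ev q u with hy0def
    have hy00 : ∀ p : ℤ, p ≠ 0 → y0 p = 0 := by
      intro p hp
      show y p - totd E Eh Ev q u p = 0
      rw [hu p hp, sub_self]
    have hy0c : totd E Eh Ev (q+1) y0 = 0 := by
      rw [hy0def, map_sub, hy, totd_totd E Eh Ev hEhh hEvv hEanti q u, sub_zero]
    have hEh00 : Eh 0 (q+1-0) (y0 0) = 0 := by
      have hc := congrFun hy0c 1
      rw [totd_apply] at hc
      simp only [Pi.zero_apply] at hc
      rw [hy00 1 (by omega)] at hc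
      rw [pi_cast (R := R) E y0 (show (0:ℤ) = 1-1 by omega)] at hc
      rw [Eh_cM, cM_cM, map_zero, cM_zero, add_zero] at hc
      rw [cM_zero_iff] at hc
      exact hc
    obtain ⟨x0, hx0⟩ := hexact0 (q+1-0) (y0 0) hEh00
    have hEv00 : Ev 0 (q+1-0) (y0 0) = 0 := by
      have hc := congrFun hy0c 0
      rw [totd_apply] at hc
      simp only [Pi.zero_apply] at hc
      rw [hEquad (0-1) (q+1-(0-1)) (Or.inl (by omega)) (y0 (0-1))] at hc
      rw [map_zero, cM_zero, zero_add, cM_zero_iff] at hc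
      exact hc
    have hdx0 : dC (q+1-0) x0 = 0 := by
      apply hinj
      rcases hsign (q+1-0) with hs | hs
      · rw [← hs x0, hx0]; exact hEv00
      · have e := hs x0
        rw [hx0, hEv00] at e
        exact neg_eq_zero.mp e.symm
    refine ⟨castC (R := R) C (show q+1-0 = q+1 by omega) x0, ?_, u, ?_⟩
    · rw [dC_cC, hdx0, map_zero]
    · funext p
      by_cases hp : (0:ℤ) = p
      · subst hp
        rw [Pi.sub_apply, LinearMap.pi_apply, dif_pos (rfl : (0:ℤ) = 0),
          LinearMap.comp_apply, h_cC, cM_cM, cM_self]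
        rw [hx0]
        show y 0 - (y 0 - totd E Eh Ev q u 0) = totd E Eh Ev q u 0
        abel
      · rw [Pi.sub_apply, LinearMap.pi_apply, dif_neg hp, LinearMap.zero_apply, sub_zero]
        exact hu p (fun h0 => hp h0.symm)
  · -- injectivity on cohomology
    rintro q x hx ⟨u, hufx⟩
    have h1 : ∀ p : ℤ, 1 ≤ p → totd E Eh Ev q u p = 0 := by
      intro p hp
      have hc := congrFun hufx p
      rw [LinearMap.pi_apply, dif_neg (by omega : ¬(0:ℤ) = p), LinearMap.zero_apply] at hc
      exact hc.symm
    have htop : ∀ p : ℤ, (((q+1).toNat + 1 : ℕ) : ℤ) ≤ p → u p = 0 := by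
      intro p hp
      exact hEquad p _ (Or.inr (by push_cast at hp ⊢; omega)) (u p)
    obtain ⟨u', hu'0, hu'tot⟩ := push2 E Eh Ev hEhh hEvv hEanti hEquad hexact
      ((q+1).toNat + 1) q u h1 htop
    have hufx' := hu'tot.trans hufx.symm
    have hEh0 : Eh 0 (q-0) (u' 0) = 0 := by
      have hc := congrFun hufx' 1
      rw [LinearMap.pi_apply, dif_neg (by omega : ¬(0:ℤ) = 1), LinearMap.zero_apply] at hc
      rw [totd_apply] at hc
      rw [hu'0 1 (by omega), pi_cast (R := R) E u' (show (0:ℤ) = 1-1 by omega)] at hc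
      rw [Eh_cM, cM_cM, map_zero, cM_zero, add_zero, cM_zero_iff] at hc
      exact hc
    obtain ⟨v0, hv0⟩ := hexact0 (q-0) (u' 0) hEh0
    have hEv0 : Ev 0 (q-0) (u' 0)
        = castM (R := R) E rfl (by omega : q+1 = q-0+1) (h (q+1) x) := by
      have hc := congrFun hufx' 0
      rw [LinearMap.pi_apply, dif_pos (rfl : (0:ℤ) = 0), LinearMap.comp_apply] at hc
      rw [totd_apply] at hc
      rw [hu'0 (0-1) (by omega), map_zero, cM_zero, zero_add] at hc
      apply cM_inj (R := R) E rfl (by omega : q-0+1 = q+1-0)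
      rw [cM_cM]
      exact hc
    rcases hsign (q-0) with hs | hs
    · have e1 : h ((q-0)+1) (dC (q-0) v0)
          = h ((q-0)+1) (castC (R := R) C (show q+1 = q-0+1 by omega) x) := by
        rw [h_cC, ← hs v0, hv0]
        exact hEv0
      have e2 : dC (q-0) v0 = castC (R := R) C (show q+1 = q-0+1 by omega) x := by
        have e3 := hinj ((q-0)+1) (dC (q-0) v0 - castC (R := R) C (show q+1 = q-0+1 by omega) x)
          (by rw [map_sub, e1, sub_self])
        exact sub_eq_zero.mp e3
      refine ⟨castC (R := R) C (show q-0 = q by omega) v0, ?_⟩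
      rw [dC_cC, e2, cC_cC, cC_self]
    · have e1 : h ((q-0)+1) (dC (q-0) (-v0))
          = h ((q-0)+1) (castC (R := R) C (show q+1 = q-0+1 by omega) x) := by
        rw [map_neg, map_neg, h_cC, ← hs v0, hv0]
        exact hEv0
      have e2 : dC (q-0) (-v0) = castC (R := R) C (show q+1 = q-0+1 by omega) x := by
        have e3 := hinj ((q-0)+1)
          (dC (q-0) (-v0) - castC (R := R) C (show q+1 = q-0+1 by omega) x)
          (by rw [map_sub, e1, sub_self])
        exact sub_eq_zero.mp e3
      refine ⟨castC (R := R) C (show q-0 = q by omega) (-v0), ?_⟩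
      rw [dC_cC, e2, cC_cC, cC_self]
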